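/- The coded subshifts X_n of the full two-shift generated by W_n={0^{2^n−1}1, 1^{2^n−1}0}, n∈ℕ, are pairwise disjoint: X_n∩X_m=∅ whenever n≠m. -/

import Mathlib

open MeasureTheory Real Filter Topology

noncomputable section

namespace PhaseTransitions

/-! ### Measure-theoretic entropy and topological pressure -/

/-- Base-2 entropy of the (finite, measurable) partition of `X` induced by an
observable `f : X → F` with finitely many values. -/
def entOfObs {X F : Type*} [MeasurableSpace X] [Fintype F]
    (μ : Measure X) (f : X → F) : ℝ :=
  ∑ a : F, -((μ (f ⁻¹' {a})).toReal * Real.logb 2 (μ (f ⁻¹' {a})).toReal)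

/-- Entropy of the transformation `T` with respect to the partition induced by
the observable `f` : the limit (= infimum) of `(1/n) H(⋁_{i<n} T⁻ⁱ f)`. -/
def entObsT {X F : Type*} [MeasurableSpace X] [Fintype F]
    (T : X → X) (μ : Measure X) (f : X → F) : ℝ :=
  ⨅ n : ℕ, entOfObs μ (fun x => fun i : Fin (n + 1) => f (T^[(i : ℕ)] x)) / (n + 1)

/-- Kolmogorov–Sinai (measure-theoretic) entropy, base 2: supremum over all
finite measurable partitions (encoded by observables with values in `Fin k`). -/
def kolSinai {X : Type*} [MeasurableSpace X] (T : X → X) (μ : Measure X) : ℝ :=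
  ⨆ k : ℕ, ⨆ f : {f : X → Fin k // Measurable f}, entObsT T μ f.1

/-- `μ` is a `T`-invariant Borel probability measure. -/
def InvProb {X : Type*} [MeasurableSpace X] (T : X → X) (μ : Measure X) : Prop :=
  IsProbabilityMeasure μ ∧ MeasurePreserving T μ μ

/-- Topological pressure, via the variational principle. -/
def pressure {X : Type*} [MeasurableSpace X] (T : X → X) (φ : X → ℝ) : ℝ :=
  ⨆ μ : {μ : Measure X // InvProb T μ}, (kolSinai T μ.1 + ∫ x, φ x ∂μ.1)

/-- An equilibrium state of the potential `φ`: an invariant probability measure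
attaining the supremum in the variational principle. -/
def IsEquilibrium {X : Type*} [MeasurableSpace X] (T : X → X) (φ : X → ℝ)
    (μ : Measure X) : Prop :=
  InvProb T μ ∧ kolSinai T μ + ∫ x, φ x ∂μ = pressure T φ

/-! ### The two-sided full shift on two symbols -/

/-- The two-sided full shift space `{0,1}^ℤ`. -/
abbrev Bin : Type := ℤ → Bool

/-- The (left) shift map. -/
def shift (x : Bin) : Bin := fun n => x (n + 1)

/-- `x` is a bi-infinite free concatenation of words from `W`: there is a
bi-infinite increasing sequence of cut points, cofinal in both directions, such
that consecutive cut points delimit words of `W`. -/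
def IsFreeConcat (W : Set (List Bool)) (x : Bin) : Prop :=
  ∃ t : ℤ → ℤ, StrictMono t ∧ (∀ N : ℤ, ∃ k, N < t k) ∧ (∀ N : ℤ, ∃ k, t k < N) ∧
    ∀ k : ℤ, ∃ w ∈ W, t (k + 1) = t k + w.length ∧
      ∀ (i : ℕ) (h : i < w.length), x (t k + (i : ℤ)) = w.get ⟨i, h⟩

/-- The coded system generated by the word set `W`: the closure of the set of
free concatenations of words from `W`. -/
def codedSystem (W : Set (List Bool)) : Set Bin :=
  closure {x | IsFreeConcat W x}

/-- The generating set `W_n = {0^{2^n-1}1, 1^{2^n-1}0}`. -/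
def genWords (n : ℕ) : Set (List Bool) :=
  {List.replicate (2 ^ n - 1) false ++ [true], List.replicate (2 ^ n - 1) true ++ [false]}

/-- The subshift `X_n`, the coded system generated by `W_n`. -/
def Xsub (n : ℕ) : Set Bin := codedSystem (genWords n)

/-- The set of words of length `j` in the language of `Y ⊆ {0,1}^ℤ`. -/
def langWord (Y : Set Bin) (j : ℕ) : Set (Fin j → Bool) :=
  {w | ∃ x ∈ Y, ∀ i : Fin j, x ((i : ℕ) : ℤ) = w i}

/-! ### The metric and the potential -/

open Classical in
/-- The metric `d(x,y) = 2^{-inf{|n| : x_n ≠ y_n}}` on the shift space. -/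
def binDist (x y : Bin) : ℝ :=
  if x = y then 0
  else (1 / 2 : ℝ) ^ sInf {m : ℕ | ∃ i : ℤ, i.natAbs = m ∧ x i ≠ y i}

/-- Distance from a point to a set. -/
def distToSet (x : Bin) (S : Set Bin) : ℝ :=
  sInf ((fun y => binDist x y) '' S)

/-- `δ_j = (10 + 3 log₂ j)/(α j)`. -/
def deltaSeq (α : ℝ) (j : ℕ) : ℝ := (10 + 3 * Real.logb 2 j) / (α * j)

/-- The drop `δ` as a function of the distance `r`: if `r = 2^{-j}` this equals
`δ_j = (10 + 3 log₂ j)/(α j)`, and `δ = 0` when `r = 0` (i.e. `δ_∞ = 0`). -/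
def deltaOf (α : ℝ) (r : ℝ) : ℝ :=
  if r = 0 then 0
  else (10 + 3 * Real.logb 2 (-Real.logb 2 r)) / (α * (-Real.logb 2 r))

/-- `c_n = -∑_{j=n}^∞ 1/(2^{j+1} β_j)`. -/
def cseq (β : ℕ → ℝ) (n : ℕ) : ℝ :=
  -∑' k : ℕ, 1 / (2 ^ (n + k + 1) * β (n + k))

/-- `φ_n(x) = c_n − δ_j` when `dist(x, X_n) = 2^{-j}` (and `φ_n = c_n` on `X_n`). -/
def phiN (α : ℝ) (c : ℕ → ℝ) (n : ℕ) (x : Bin) : ℝ :=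
  c n - deltaOf α (distToSet x (Xsub n))

/-- The potential `φ = sup_{n ≥ 1} φ_n`. -/
def phi (α : ℝ) (c : ℕ → ℝ) (x : Bin) : ℝ :=
  ⨆ n : ℕ, phiN α c (n + 1) x

/-- The constants of the finite (truncated) construction:
`c_{n} = c_1 + ∑_{j=1}^{n-1} 1/(2^{j+1} β_j)`. -/
def cseqFin (c1 : ℝ) (β : ℕ → ℝ) (n : ℕ) : ℝ :=
  c1 + ∑ j ∈ Finset.Ico 1 n, 1 / (2 ^ (j + 1) * β j)

/-- The truncated potential `φ = max{φ_n : 1 ≤ n ≤ N+1}`. -/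
def phiFin (α : ℝ) (c : ℕ → ℝ) (N : ℕ) (x : Bin) : ℝ :=
  ⨆ n : Fin (N + 1), phiN α c ((n : ℕ) + 1) x

/-! ### Measures of maximal entropy and relative pressure -/

/-- `μ` is a measure of maximal entropy for the subsystem `Y` (a `T`-invariant
probability measure giving full mass to `Y` and maximizing entropy among such). -/
def IsMaxEntropyOn (Y : Set Bin) (μ : Measure Bin) : Prop :=
  InvProb shift μ ∧ μ Y = 1 ∧
    ∀ ν : Measure Bin, InvProb shift ν → ν Y = 1 → kolSinai shift ν ≤ kolSinai shift μ

/-- The topological pressure of the subsystem `Y` (computed via the variational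
principle over invariant measures giving full mass to `Y`). -/
def pressureOn (Y : Set Bin) (φ : Bin → ℝ) : ℝ :=
  ⨆ μ : {μ : Measure Bin // InvProb shift μ ∧ μ Y = 1},
    (kolSinai shift μ.1 + ∫ x, φ x ∂μ.1)

/-! ### The pin-sequence space -/

/-- `Y`, the closure of the union of the `X_n`, `n ≥ 1`. -/
def Yset : Set Bin := closure (⋃ n : ℕ, Xsub (n + 1))

/-- The word `x_i ⋯ x_j` belongs to the language of `Y`. -/
def SegIn (x : Bin) (i j : ℤ) (Y : Set Bin) : Prop :=
  ∃ y ∈ Y, ∀ m : ℤ, i ≤ m → m ≤ j → y (m - i) = x m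

/-- The word `x_0 ⋯ x_{j-1}` belongs to the language of `Y`. -/
def WordIn (x : Bin) (j : ℕ) (Y : Set Bin) : Prop :=
  ∃ y ∈ Y, ∀ m : ℕ, m < j → y (m : ℤ) = x (m : ℤ)

/-- The pin-sequence space `P ⊆ X × {0,1}^ℤ`: pinless stretches of `x` lie in the
language of `Y`, and stretches between two pins do not. -/
def PinSpace : Set (Bin × Bin) :=
  {p | (∀ i j : ℤ, i < j → (∀ k : ℤ, i < k → k ≤ j → p.2 k = false) → SegIn p.1 i j Yset) ∧
       (∀ i j : ℤ, i < j → p.2 i = true → p.2 j = true → ¬ SegIn p.1 i j Yset)}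

/-- The product shift `T̄(x,z) = (Tx, Tz)`. -/
def shift2 (p : Bin × Bin) : Bin × Bin := (shift p.1, shift p.2)

/-- The set `A = {(x,z) ∈ P : z_0 = 1}`. -/
def Aset : Set (Bin × Bin) := {p | p ∈ PinSpace ∧ p.2 0 = true}

/-- The first return time to `A`. -/
def retTime (p : Bin × Bin) : ℕ :=
  sInf {k : ℕ | 1 ≤ k ∧ shift2^[k] p ∈ Aset}

/-- The induced (first-return) map `T̄_A`. -/
def inducedMap (p : Bin × Bin) : Bin × Bin := shift2^[retTime p] p

/-- `Q_j`, the set of points of `A` with first return time `j`. -/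
def Qset (j : ℕ) : Set (Bin × Bin) := {p | p ∈ Aset ∧ retTime p = j}

/-- `Q_{j,s}` for `1 ≤ s ≤ ⌊log₂ j⌋ - 3`: points of `Q_j` whose initial block of
length `j` lies in the language of `X_s`; the class `s = 0` collects the blocks
belonging to some `X_{s'}` with `s' ≥ ⌊log₂ j⌋ - 2`. -/
def Qjs (j s : ℕ) : Set (Bin × Bin) :=
  if s = 0 then
    {p | p ∈ Qset j ∧ ∃ s' : ℕ, 1 ≤ s' ∧ Nat.log 2 j - 2 ≤ s' ∧ WordIn p.1 j (Xsub s')}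
  else {p | p ∈ Qset j ∧ WordIn p.1 j (Xsub s)}



/-! ### Auxiliary lemmas for Statement 13 -/

lemma mem_genWords {n : ℕ} {w : List Bool} (hw : w ∈ genWords n) :
    ∃ b : Bool, w = List.replicate (2 ^ n - 1) b ++ [!b] := by
  rcases hw with h | h
  · exact ⟨false, by simpa using h⟩
  · exact ⟨true, by simpa using h⟩

lemma exists_cut (t0 L i : ℤ) (hL : 0 < L) :
    ∃ k : ℤ, i < t0 + k * L ∧ t0 + k * L ≤ i + L := by
  refine ⟨(i - t0) / L + 1, ?_, ?_⟩ <;>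
  · have h1 := Int.mul_ediv_add_emod (i - t0) L
    have h2 := Int.emod_nonneg (i - t0) hL.ne'
    have h3 := Int.emod_lt_of_pos (i - t0) hL
    have h4 : ((i - t0) / L + 1) * L = L * ((i - t0) / L) + L := by ring
    omega

lemma freeConcat_cuts {n : ℕ} (hn : 1 ≤ n) {x : Bin} (hx : IsFreeConcat (genWords n) x) :
    ∃ t : ℤ → ℤ, (∀ k : ℤ, t k = t 0 + k * 2 ^ n) ∧
      ∀ k : ℤ, (∀ j : ℤ, 0 ≤ j → j < 2 ^ n - 1 → x (t k + j) = x (t k)) ∧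
        x (t k + (2 ^ n - 1)) ≠ x (t k) := by
  obtain ⟨t, hmono, hc1, hc2, hword⟩ := hx
  have hN2 : 2 ≤ 2 ^ n := by
    calc 2 = 2 ^ 1 := rfl
    _ ≤ 2 ^ n := Nat.pow_le_pow_right (by norm_num) hn
  have hstep : ∀ k : ℤ, t (k + 1) = t k + 2 ^ n := by
    intro k
    obtain ⟨w, hw, hlen, -⟩ := hword k
    obtain ⟨b, rfl⟩ := mem_genWords hw
    have : (List.replicate (2 ^ n - 1) b ++ [!b]).length = 2 ^ n := by
      simp [List.length_append, List.length_replicate]; omega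
    rw [hlen, this]; push_cast; ring
  refine ⟨t, ?_, ?_⟩
  · intro k
    induction k using Int.induction_on with
    | zero => simp
    | succ k ih => rw [hstep k, ih]; ring
    | pred k ih =>
        have h := hstep (-(k:ℤ) - 1)
        rw [show (-(k:ℤ) - 1) + 1 = -(k:ℤ) by ring, ih] at h
        have h2 : (-(k:ℤ) - 1) * 2 ^ n = (-(k:ℤ)) * 2 ^ n - 2 ^ n := by ring
        linarith
  · intro k
    obtain ⟨w, hw, hlen, hval⟩ := hword k
    obtain ⟨b, rfl⟩ := mem_genWords hw
    have hlw : (List.replicate (2 ^ n - 1) b ++ [!b]).length = 2 ^ n := by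
      simp [List.length_append, List.length_replicate]; omega
    have hb : ∀ (i : ℕ), i < 2 ^ n - 1 → x (t k + (i : ℤ)) = b := by
      intro i hi
      have h2 : i < (List.replicate (2 ^ n - 1) b ++ [!b]).length := by omega
      rw [hval i h2]
      simp [List.get_eq_getElem]
      rw [List.getElem_append_left (by simpa using hi)]
      simp
    have h0 : x (t k) = b := by
      have := hb 0 (by omega)
      simpa using this
    have hlast : x (t k + ((2 ^ n - 1 : ℕ) : ℤ)) = !b := by
      have h2 : 2 ^ n - 1 < (List.replicate (2 ^ n - 1) b ++ [!b]).length := by omega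
      rw [hval _ h2]
      simp [List.get_eq_getElem]
    have hc : ((2 ^ n - 1 : ℕ) : ℤ) = 2 ^ n - 1 := by
      push_cast [Nat.cast_sub (by omega : 1 ≤ 2 ^ n)]; ring
    constructor
    · intro j hj0 hj
      have hji : j = ((j.toNat : ℕ) : ℤ) := by omega
      rw [hji, hb j.toNat (by omega), h0]
    · rw [← hc, hlast, h0]
      simp

lemma isClosed_ne_pair (p q : ℤ) : IsClosed {x : Bin | x p ≠ x q} := by
  have h : {x : Bin | x p ≠ x q} = {x : Bin | x p = !x q} := by
    ext x; simp [Bool.eq_not_iff]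
  rw [h]
  exact isClosed_eq (continuous_apply p)
    ((continuous_of_discreteTopology (f := not)).comp (continuous_apply q))

lemma isClosed_A (L : ℤ) :
    IsClosed {x : Bin | ∀ i : ℤ, ∃ p ∈ Finset.Icc i (i + L - 1), x p ≠ x (p + 1)} := by
  have h : {x : Bin | ∀ i : ℤ, ∃ p ∈ Finset.Icc i (i + L - 1), x p ≠ x (p + 1)}
      = ⋂ i : ℤ, ⋃ p ∈ Finset.Icc i (i + L - 1), {x : Bin | x p ≠ x (p + 1)} := by
    ext x; simp
  rw [h]
  exact isClosed_iInter fun i =>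
    (Finset.Icc i (i + L - 1)).finite_toSet.isClosed_biUnion fun p _ => isClosed_ne_pair p (p+1)

lemma isClosed_B (L : ℤ) :
    IsClosed {x : Bin | ∃ i ∈ Finset.Ico (0:ℤ) L,
      ∀ j ∈ Finset.Ico (0:ℤ) (L - 1), x (i + j) = x i} := by
  have h : {x : Bin | ∃ i ∈ Finset.Ico (0:ℤ) L, ∀ j ∈ Finset.Ico (0:ℤ) (L - 1), x (i + j) = x i}
      = ⋃ i ∈ Finset.Ico (0:ℤ) L, ⋂ j ∈ Finset.Ico (0:ℤ) (L - 1), {x : Bin | x (i + j) = x i} := by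
    ext x; simp
  rw [h]
  exact (Finset.Ico (0:ℤ) L).finite_toSet.isClosed_biUnion fun i _ =>
    isClosed_biInter fun j _ => isClosed_eq (continuous_apply (i + j)) (continuous_apply i)

lemma Xsub_subset_A {m : ℕ} (hm : 1 ≤ m) :
    Xsub m ⊆ {x : Bin | ∀ i : ℤ, ∃ p ∈ Finset.Icc i (i + 2 ^ m - 1), x p ≠ x (p + 1)} := by
  refine closure_minimal ?_ (isClosed_A _)
  intro x hx i
  obtain ⟨t, ht, hprop⟩ := freeConcat_cuts hm hx
  have hL2 : (2:ℤ) ≤ 2 ^ m := by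
    calc (2:ℤ) = 2 ^ 1 := rfl
    _ ≤ 2 ^ m := pow_le_pow_right₀ (by norm_num) hm
  obtain ⟨k, hk1, hk2⟩ := exists_cut (t 0) (2 ^ m) i (by positivity)
  rw [← ht k] at hk1 hk2
  by_cases hcase : t k ≤ i + 1
  · refine ⟨t k + (2 ^ m - 2), by simp [Finset.mem_Icc]; omega, ?_⟩
    have h1 := (hprop k).1 (2 ^ m - 2) (by omega) (by omega)
    have h2 := (hprop k).2
    rw [show t k + (2 ^ m - 2) + 1 = t k + (2 ^ m - 1) by ring]
    rw [h1]
    exact fun h => h2 h.symm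
  · have hk' : t (k - 1) = t k - 2 ^ m := by
      rw [ht (k - 1), ht k]; ring
    refine ⟨t (k - 1) + (2 ^ m - 2), by simp [Finset.mem_Icc]; omega, ?_⟩
    have h1 := (hprop (k - 1)).1 (2 ^ m - 2) (by omega) (by omega)
    have h2 := (hprop (k - 1)).2
    rw [show t (k - 1) + (2 ^ m - 2) + 1 = t (k - 1) + (2 ^ m - 1) by ring]
    rw [h1]
    exact fun h => h2 h.symm

lemma Xsub_subset_B {n : ℕ} (hn : 1 ≤ n) :
    Xsub n ⊆ {x : Bin | ∃ i ∈ Finset.Ico (0:ℤ) (2 ^ n),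
      ∀ j ∈ Finset.Ico (0:ℤ) (2 ^ n - 1), x (i + j) = x i} := by
  refine closure_minimal ?_ (isClosed_B _)
  intro x hx
  obtain ⟨t, ht, hprop⟩ := freeConcat_cuts hn hx
  obtain ⟨k, hk1, hk2⟩ := exists_cut (t 0) (2 ^ n) (-1) (by positivity)
  rw [← ht k] at hk1 hk2
  refine ⟨t k, by simp [Finset.mem_Ico]; omega, ?_⟩
  intro j hj
  simp only [Finset.mem_Ico] at hj
  exact (hprop k).1 j hj.1 hj.2

lemma Xsub_disjoint_aux {m n : ℕ} (hm : 1 ≤ m) (hmn : m < n) : Xsub m ∩ Xsub n = ∅ := by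
  rw [Set.eq_empty_iff_forall_notMem]
  rintro x ⟨hxm, hxn⟩
  have hA := Xsub_subset_A hm hxm
  have hB := Xsub_subset_B (hm.trans hmn.le) hxn
  obtain ⟨i, hi, hconst⟩ := hB
  obtain ⟨p, hp, hne⟩ := hA i
  simp only [Finset.mem_Icc] at hp
  have key : (2:ℤ) ^ m + 2 ≤ 2 ^ n := by
    have h1 : (2:ℤ) ^ (m + 1) ≤ 2 ^ n := pow_le_pow_right₀ (by norm_num) hmn
    have h2 : (2:ℤ) ≤ 2 ^ m := by
      calc (2:ℤ) = 2 ^ 1 := rfl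
      _ ≤ 2 ^ m := pow_le_pow_right₀ (by norm_num) hm
    have h3 : (2:ℤ) ^ (m + 1) = 2 * 2 ^ m := by ring
    linarith
  have e1 := hconst (p - i) (by simp [Finset.mem_Ico]; omega)
  have e2 := hconst (p + 1 - i) (by simp [Finset.mem_Ico]; omega)
  rw [show i + (p - i) = p by ring] at e1
  rw [show i + (p + 1 - i) = p + 1 by ring] at e2
  exact hne (e1.trans e2.symm)

/-- the subshifts `X_n`, `n ≥ 1`, are pairwise disjoint. -/
theorem Xsub_disjoint (m n : ℕ) (hm : 1 ≤ m) (hn : 1 ≤ n) (hmn : m ≠ n) :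
    Xsub m ∩ Xsub n = ∅ := by
  rcases lt_or_gt_of_ne hmn with h | h
  · exact Xsub_disjoint_aux hm h
  · rw [Set.inter_comm]; exact Xsub_disjoint_aux hn h

end PhaseTransitions
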